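/- Let M be a matroid with ground set [m] and let u ∈ ℤ^m with Σ_{j=1}^m u_j = 1. Then Σ_π (−1)^{m − l(π)} · rk_M(A_π(u)), the sum over all flags π of subsets of [m], equals Σ_S Σ_{π ∈ Π_u(S)} (−1)^{m − l(π)} · rk_M(S), where the outer sum on the right-hand side is over all nonempty subsets S ⊆ [m] with Σ_{j∈S} u_j = 1. -/

import Mathlib

open scoped Classical

/-- A flag of subsets of `[m]`: a finite set of nonempty subsets of `Fin m`, totally
ordered by inclusion, containing the full set `[m]`.  Its length is `π.card`. -/
def IsFlag (m : ℕ) (π : Finset (Finset (Fin m))) : Prop :=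
  (∀ S ∈ π, S.Nonempty) ∧ Finset.univ ∈ π ∧ ∀ S ∈ π, ∀ T ∈ π, S ⊆ T ∨ T ⊆ S

/-- The rank of a set `X` in a matroid `M`: the largest cardinality of an
independent subset of `X`. -/
noncomputable def matroidRk {α : Type*} (M : Matroid α) (X : Set α) : ℕ :=
  sSup {n : ℕ | ∃ I, M.Indep I ∧ I ⊆ X ∧ I.ncard = n}

/-- The weight-`u` space of sections `H⁰(U_σ, E_M)_u = A_π(u)` for the flag `π`. -/
def Aflag (m : ℕ) (M : Matroid (Fin m)) (u : Fin m → ℤ) (π : Finset (Finset (Fin m))) :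
    Set (Fin m) :=
  {i | ∀ S ∈ π,
    if i ∈ M.closure (S : Set (Fin m)) then (∑ j ∈ S, u j) ≤ 1 else (∑ j ∈ S, u j) ≤ 0}

/-- `π ∈ Π_u(S)`: `π` is a flag containing `S`, all of whose members have `u`-sum
`≤ 1`, and `S` is the first member of `π` with `u`-sum equal to `1` (members strictly
below `S` have `u`-sum `≤ 0`). -/
def memPi (m : ℕ) (u : Fin m → ℤ) (S : Finset (Fin m)) (π : Finset (Finset (Fin m))) :
    Prop :=
  IsFlag m π ∧ S ∈ π ∧ (∀ T ∈ π, (∑ j ∈ T, u j) ≤ 1) ∧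
    ∀ T ∈ π, T ⊂ S → (∑ j ∈ T, u j) ≤ 0

section Aux

variable {m : ℕ}

lemma matroidRk_eq_of_basis (M : Matroid (Fin m)) {J X : Set (Fin m)}
    (hJ : M.IsBasis J X) : matroidRk M X = J.ncard := by
  have key : ∀ n ∈ {n : ℕ | ∃ I, M.Indep I ∧ I ⊆ X ∧ I.ncard = n}, n ≤ J.ncard := by
    rintro n ⟨I, hI, hIX, rfl⟩
    obtain ⟨I', hI', hII'⟩ := hI.subset_isBasis_of_subset hIX hJ.subset_ground
    have h1 : I.ncard ≤ I'.ncard := Set.ncard_le_ncard hII' (Set.toFinite _)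
    have h2 : I'.ncard = J.ncard := by
      have := hI'.encard_eq_encard hJ
      simp [Set.ncard, this]
    omega
  have hmem : J.ncard ∈ {n : ℕ | ∃ I, M.Indep I ∧ I ⊆ X ∧ I.ncard = n} :=
    ⟨J, hJ.indep, hJ.subset, rfl⟩
  exact le_antisymm (csSup_le ⟨_, hmem⟩ key) (le_csSup ⟨J.ncard, key⟩ hmem)

lemma matroidRk_closure (M : Matroid (Fin m)) (X : Set (Fin m)) (hX : X ⊆ M.E) :
    matroidRk M (M.closure X) = matroidRk M X := by
  obtain ⟨J, hJ⟩ := M.exists_isBasis X hX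
  rw [matroidRk_eq_of_basis M hJ, matroidRk_eq_of_basis M hJ.isBasis_closure_right]

lemma matroidRk_empty (M : Matroid (Fin m)) : matroidRk M (∅ : Set (Fin m)) = 0 := by
  have : {n : ℕ | ∃ I, M.Indep I ∧ I ⊆ (∅ : Set (Fin m)) ∧ I.ncard = n} = {0} := by
    ext n
    constructor
    · rintro ⟨I, hI, hIX, rfl⟩
      have : I = ∅ := Set.subset_empty_iff.mp hIX
      simp [this]
    · rintro rfl
      exact ⟨∅, M.empty_indep, Set.empty_subset _, Set.ncard_empty _⟩
  rw [matroidRk, this, csSup_singleton]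

/-- The first member of a flag with `u`-sum equal to `1`. -/
noncomputable def Smin (u : Fin m → ℤ) (π : Finset (Finset (Fin m))) : Finset (Fin m) :=
  if h : (π.filter (fun T => (∑ j ∈ T, u j) = 1)).Nonempty then
    (Finset.exists_min_image _ Finset.card h).choose else ∅

lemma Smin_spec {u : Fin m → ℤ} (hu : ∑ j, u j = 1) {π : Finset (Finset (Fin m))}
    (hπ : IsFlag m π) (hle : ∀ T ∈ π, (∑ j ∈ T, u j) ≤ 1) :
    Smin u π ∈ π ∧ (∑ j ∈ Smin u π, u j) = 1 ∧
      ∀ T ∈ π, T ⊂ Smin u π → (∑ j ∈ T, u j) ≤ 0 := by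
  have hne : (π.filter (fun T => (∑ j ∈ T, u j) = 1)).Nonempty :=
    ⟨Finset.univ, Finset.mem_filter.mpr ⟨hπ.2.1, hu⟩⟩
  have hspec := (Finset.exists_min_image
    (π.filter (fun T => (∑ j ∈ T, u j) = 1)) Finset.card hne).choose_spec
  rw [Smin, dif_pos hne]
  set S := (Finset.exists_min_image
    (π.filter (fun T => (∑ j ∈ T, u j) = 1)) Finset.card hne).choose with hS
  obtain ⟨hSmem, hSmin⟩ := hspec
  have hSπ : S ∈ π := (Finset.mem_filter.mp hSmem).1
  have hS1 : (∑ j ∈ S, u j) = 1 := (Finset.mem_filter.mp hSmem).2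
  refine ⟨hSπ, hS1, fun T hT hTS => ?_⟩
  by_contra h
  have hT1 : (∑ j ∈ T, u j) = 1 := by
    have := hle T hT; omega
  have hcard : S.card ≤ T.card := hSmin T (Finset.mem_filter.mpr ⟨hT, hT1⟩)
  have := Finset.card_lt_card hTS
  omega

lemma Smin_unique {u : Fin m → ℤ} {π : Finset (Finset (Fin m))}
    (hπ : IsFlag m π) {S S' : Finset (Fin m)}
    (hS : S ∈ π) (hS1 : (∑ j ∈ S, u j) = 1) (hSmin : ∀ T ∈ π, T ⊂ S → (∑ j ∈ T, u j) ≤ 0)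
    (hS' : S' ∈ π) (hS'1 : (∑ j ∈ S', u j) = 1)
    (hS'min : ∀ T ∈ π, T ⊂ S' → (∑ j ∈ T, u j) ≤ 0) : S = S' := by
  by_contra hne
  rcases hπ.2.2 S hS S' hS' with h | h
  · have := hS'min S hS ⟨h, fun h' => hne (le_antisymm h h')⟩
    omega
  · have := hSmin S' hS' ⟨h, fun h' => hne (le_antisymm h' h)⟩
    omega

lemma Aflag_eq_closure {M : Matroid (Fin m)} (hE : M.E = Set.univ)
    {u : Fin m → ℤ} (hu : ∑ j, u j = 1) {π : Finset (Finset (Fin m))}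
    (hπ : IsFlag m π) (hle : ∀ T ∈ π, (∑ j ∈ T, u j) ≤ 1) :
    Aflag m M u π = M.closure ((Smin u π : Finset (Fin m)) : Set (Fin m)) := by
  obtain ⟨hSπ, hS1, hSmin⟩ := Smin_spec hu hπ hle
  ext i
  constructor
  · intro hi
    have := hi (Smin u π) hSπ
    by_contra hcl
    rw [if_neg hcl] at this
    omega
  · intro hi T hT
    split_ifs with h
    · exact hle T hT
    · -- i ∉ M.closure T; show ∑ ≤ 0
      by_contra hc
      have hT1 : (∑ j ∈ T, u j) = 1 := by have := hle T hT; omega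
      -- Smin ⊆ T, so closure Smin ⊆ closure T
      have hsub : Smin u π ⊆ T := by
        rcases hπ.2.2 (Smin u π) hSπ T hT with h' | h'
        · exact h'
        · rcases eq_or_ne T (Smin u π) with rfl | hne
          · exact subset_rfl
          · have := hSmin T hT ⟨h', fun h'' => hne (le_antisymm h' h'')⟩
            omega
      exact h (M.closure_subset_closure (by exact_mod_cast hsub) hi)

end Aux

/-- The equivariant Euler characteristic `χ(X_m, E_M)_u`, as the alternating sum of
`rk_M(A_π(u))` over all flags `π`, equals the double sum over nonempty `S ⊆ [m]` with
`∑_{j∈S} u_j = 1` and flags `π ∈ Π_u(S)` of `(-1)^{m - l(π)} rk_M(S)`. -/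
theorem euler_char_as_double_sum (m : ℕ) (M : Matroid (Fin m)) (hE : M.E = Set.univ)
    (u : Fin m → ℤ) (hu : ∑ j, u j = 1) :
    ∑ π ∈ Finset.univ.filter (IsFlag m),
        (-1 : ℤ) ^ (m - π.card) * (matroidRk M (Aflag m M u π) : ℤ)
      = ∑ S ∈ Finset.univ.filter
            (fun S : Finset (Fin m) => S.Nonempty ∧ (∑ j ∈ S, u j) = 1),
          ∑ π ∈ Finset.univ.filter (memPi m u S),
            (-1 : ℤ) ^ (m - π.card) * (matroidRk M (S : Set (Fin m)) : ℤ) := by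
  classical
  set Good : Finset (Finset (Finset (Fin m))) := Finset.univ.filter
      (fun π : Finset (Finset (Fin m)) => IsFlag m π ∧ ∀ T ∈ π, (∑ j ∈ T, u j) ≤ 1) with hGood
  -- Step 1: LHS restricts to good flags
  have step1 : ∑ π ∈ Finset.univ.filter (IsFlag m),
      (-1 : ℤ) ^ (m - π.card) * (matroidRk M (Aflag m M u π) : ℤ)
      = ∑ π ∈ Good, (-1 : ℤ) ^ (m - π.card) * (matroidRk M (Aflag m M u π) : ℤ) := by
    refine (Finset.sum_subset ?_ ?_).symm
    · intro π hπ
      simp only [hGood, Finset.mem_filter] at hπ ⊢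
      exact ⟨hπ.1, hπ.2.1⟩
    · intro π hπ hπ'
      simp only [hGood, Finset.mem_filter, Finset.mem_univ, true_and, not_and] at hπ hπ'
      push_neg at hπ'
      obtain ⟨T, hT, hT2⟩ := hπ' hπ
      have hA : Aflag m M u π = ∅ := by
        ext i
        simp only [Aflag, Set.mem_setOf_eq, Set.mem_empty_iff_false, iff_false, not_forall]
        refine ⟨T, hT, ?_⟩
        split_ifs <;> omega
      rw [hA, matroidRk_empty]
      ring
  rw [step1]
  -- Step 2: rewrite terms of good flags
  have step2 : ∑ π ∈ Good, (-1 : ℤ) ^ (m - π.card) * (matroidRk M (Aflag m M u π) : ℤ)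
      = ∑ π ∈ Good, (-1 : ℤ) ^ (m - π.card) *
          (matroidRk M ((Smin u π : Finset (Fin m)) : Set (Fin m)) : ℤ) := by
    refine Finset.sum_congr rfl fun π hπ => ?_
    simp only [hGood, Finset.mem_filter, Finset.mem_univ, true_and] at hπ
    rw [Aflag_eq_closure hE hu hπ.1 hπ.2,
      matroidRk_closure M _ (by rw [hE]; exact Set.subset_univ _)]
  rw [step2]
  -- Step 3: RHS as a sum over a sigma type, then a bijection with Good
  rw [Finset.sum_sigma']
  refine (Finset.sum_nbij' (fun p => p.2)
    (fun π => (⟨Smin u π, π⟩ :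
      (S : Finset (Fin m)) × Finset (Finset (Fin m)))) ?_ ?_ ?_ ?_ ?_).symm
  · -- image of sigma lands in Good
    rintro ⟨S, π⟩ hp
    simp only [Finset.mem_sigma, Finset.mem_filter, Finset.mem_univ, true_and] at hp
    obtain ⟨_, hflag, _, hle, _⟩ := hp
    simp only [hGood, Finset.mem_filter, Finset.mem_univ, true_and]
    exact ⟨hflag, hle⟩
  · -- good flag gives a sigma element
    intro π hπ
    simp only [hGood, Finset.mem_filter, Finset.mem_univ, true_and] at hπ
    obtain ⟨hflag, hle⟩ := hπ
    obtain ⟨hSπ, hS1, hSmin⟩ := Smin_spec hu hflag hle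
    simp only [Finset.mem_sigma, Finset.mem_filter, Finset.mem_univ, true_and]
    exact ⟨⟨hflag.1 _ hSπ, hS1⟩, hflag, hSπ, hle, hSmin⟩
  · -- left inverse
    rintro ⟨S, π⟩ hp
    simp only [Finset.mem_sigma, Finset.mem_filter, Finset.mem_univ, true_and] at hp
    obtain ⟨⟨hSne, hS1⟩, hflag, hSπ, hle, hSmin⟩ := hp
    obtain ⟨hS'π, hS'1, hS'min⟩ := Smin_spec hu hflag hle
    have : Smin u π = S := Smin_unique hflag hS'π hS'1 hS'min hSπ hS1 hSmin
    simp [this]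
  · -- right inverse
    intro π _
    rfl
  · -- values agree
    rintro ⟨S, π⟩ hp
    simp only [Finset.mem_sigma, Finset.mem_filter, Finset.mem_univ, true_and] at hp
    obtain ⟨⟨hSne, hS1⟩, hflag, hSπ, hle, hSmin⟩ := hp
    obtain ⟨hS'π, hS'1, hS'min⟩ := Smin_spec hu hflag hle
    have : Smin u π = S := Smin_unique hflag hS'π hS'1 hS'min hSπ hS1 hSmin
    simp [this]
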